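/- (Theorem 4.) For a geometrically uniform state set with linearly independent states and equal prior probabilities η_g = 1/|G|, the equal-probability measurement minimizes the probability of an inconclusive result: the constant vector p_g = λ_min is primal feasible, and for every primal feasible p one has (1/|G|)·Σ_{g∈G} p_g ≤ λ_min, where λ_min is the smallest eigenvalue of the Gram matrix ΦᴴΦ. -/

import Mathlib

open Matrix BigOperators ComplexOrder
set_option linter.unusedSectionVars false

noncomputable section

/-- The matrix whose column indexed by `g` is the state `ρ(g) φ`. -/
def guMatrix {G : Type*} [Group G] [Fintype G] (n : ℕ)
    (ρ : G →* Matrix.unitaryGroup (Fin n) ℂ) (φ : Fin n → ℂ) :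
    Matrix (Fin n) G ℂ :=
  Matrix.of fun j g => ((ρ g : Matrix (Fin n) (Fin n) ℂ).mulVec φ) j

/-- The reciprocal states: columns of `Φ (ΦᴴΦ)⁻¹`. -/
def guReciprocal {G : Type*} [Group G] [Fintype G] [DecidableEq G] (n : ℕ)
    (ρ : G →* Matrix.unitaryGroup (Fin n) ℂ) (φ : Fin n → ℂ) :
    Matrix (Fin n) G ℂ :=
  guMatrix n ρ φ * ((guMatrix n ρ φ)ᴴ * guMatrix n ρ φ)⁻¹

/-- The rank-one operator `Q_g = φ̃_g φ̃_gᴴ`. -/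
def guQop {G : Type*} [Group G] [Fintype G] [DecidableEq G] (n : ℕ)
    (ρ : G →* Matrix.unitaryGroup (Fin n) ℂ) (φ : Fin n → ℂ) (g : G) :
    Matrix (Fin n) (Fin n) ℂ :=
  vecMulVec (fun a => guReciprocal n ρ φ a g) (fun b => star (guReciprocal n ρ φ b g))

/-- Primal feasibility for the GU unambiguous-discrimination SDP. -/
def guPrimalFeasible {G : Type*} [Group G] [Fintype G] [DecidableEq G] (n : ℕ)
    (ρ : G →* Matrix.unitaryGroup (Fin n) ℂ) (φ : Fin n → ℂ) (p : G → ℝ) : Prop :=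
  (∀ g, 0 ≤ p g) ∧
    ((1 : Matrix (Fin n) (Fin n) ℂ) - ∑ g : G, (p g : ℂ) • guQop n ρ φ g).PosSemidef

section Helpers

variable {G : Type*} [Group G] [Fintype G] [DecidableEq G] (n : ℕ)
  (ρ : G →* Matrix.unitaryGroup (Fin n) ℂ) (φ : Fin n → ℂ)

private lemma gram_apply (a b : G) :
    ((guMatrix n ρ φ)ᴴ * guMatrix n ρ φ) a b
      = star ((ρ a : Matrix (Fin n) (Fin n) ℂ) *ᵥ φ) ⬝ᵥ ((ρ b : Matrix (Fin n) (Fin n) ℂ) *ᵥ φ) := by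
  simp [Matrix.mul_apply, guMatrix, dotProduct, Matrix.conjTranspose_apply]

private lemma gram_shift (k g h : G) :
    ((guMatrix n ρ φ)ᴴ * guMatrix n ρ φ) (k*g) (k*h)
      = ((guMatrix n ρ φ)ᴴ * guMatrix n ρ φ) g h := by
  rw [_root_.gram_apply, _root_.gram_apply]
  have hk : ∀ a : G, ((ρ (k*a) : Matrix (Fin n) (Fin n) ℂ)) *ᵥ φ
      = (ρ k : Matrix (Fin n) (Fin n) ℂ) *ᵥ ((ρ a : Matrix (Fin n) (Fin n) ℂ) *ᵥ φ) := by
    intro a; rw [_root_.map_mul, Matrix.mulVec_mulVec]; rfl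
  rw [hk, hk, Matrix.star_mulVec, Matrix.dotProduct_mulVec, Matrix.vecMul_vecMul,
    ← Matrix.star_eq_conjTranspose, Matrix.UnitaryGroup.star_mul_self, Matrix.vecMul_one]

private lemma guMatrix_mulVec (u : G → ℂ) :
    guMatrix n ρ φ *ᵥ u = ∑ g : G, u g • ((ρ g : Matrix (Fin n) (Fin n) ℂ) *ᵥ φ) := by
  funext j
  simp [Matrix.mulVec, guMatrix, dotProduct, Finset.sum_apply, mul_comm]


private lemma gram_posDef
    (hind : LinearIndependent ℂ (fun g : G => (ρ g : Matrix (Fin n) (Fin n) ℂ).mulVec φ)) :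
    ((guMatrix n ρ φ)ᴴ * guMatrix n ρ φ).PosDef := by
  refine Matrix.PosDef.of_dotProduct_mulVec_pos (Matrix.isHermitian_conjTranspose_mul_self _) fun x hx => ?_
  have hΦx : guMatrix n ρ φ *ᵥ x ≠ 0 := by
    intro h0
    apply hx
    funext g
    exact (Fintype.linearIndependent_iff.mp hind) x
      (by rw [← guMatrix_mulVec]; exact h0) g
  have key : star x ⬝ᵥ ((guMatrix n ρ φ)ᴴ * guMatrix n ρ φ) *ᵥ x
      = star (guMatrix n ρ φ *ᵥ x) ⬝ᵥ (guMatrix n ρ φ *ᵥ x) := by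
    rw [← Matrix.mulVec_mulVec, Matrix.star_mulVec, Matrix.dotProduct_mulVec]
  rw [key]
  exact Matrix.dotProduct_star_self_pos_iff.mpr hΦx

private lemma shift_eig {lam : ℝ} {u : G → ℂ}
    (hu : ((guMatrix n ρ φ)ᴴ * guMatrix n ρ φ) *ᵥ u = (lam : ℂ) • u) (h : G) :
    ((guMatrix n ρ φ)ᴴ * guMatrix n ρ φ) *ᵥ (fun g => u (h⁻¹ * g))
      = (lam : ℂ) • fun g => u (h⁻¹ * g) := by
  funext g
  have hg := congrFun hu (h⁻¹ * g)
  simp only [Matrix.mulVec, dotProduct, Pi.smul_apply, smul_eq_mul] at hg ⊢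
  rw [← hg]
  refine (Fintype.sum_equiv (Equiv.mulLeft h) _ _ fun k => ?_).symm
  have := gram_shift n ρ φ h⁻¹ g (h * k)
  simp only [inv_mul_cancel_left] at this
  rw [Equiv.coe_mulLeft, ← this, inv_mul_cancel_left]

private lemma sumQ :
    ∑ g : G, guQop n ρ φ g = guReciprocal n ρ φ * (guReciprocal n ρ φ)ᴴ := by
  ext a b
  simp only [guQop, Matrix.sum_apply, Matrix.vecMulVec_apply, Matrix.mul_apply,
    Matrix.conjTranspose_apply, Pi.star_apply]

private lemma sum_mulVec' {ι : Type*} (s : Finset ι) (M : ι → Matrix (Fin n) (Fin n) ℂ)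
    (x : Fin n → ℂ) : (∑ i ∈ s, M i) *ᵥ x = ∑ i ∈ s, M i *ᵥ x := by
  funext a
  simp only [Matrix.mulVec, dotProduct, Finset.sum_apply, Matrix.sum_apply, Finset.sum_mul]
  rw [Finset.sum_comm]


private lemma dotProduct_sum' {ι : Type*} (s : Finset ι) (v : Fin n → ℂ)
    (w : ι → Fin n → ℂ) : v ⬝ᵥ (∑ i ∈ s, w i) = ∑ i ∈ s, v ⬝ᵥ w i := by
  simp only [dotProduct, Finset.sum_apply, Finset.mul_sum]
  rw [Finset.sum_comm]

private lemma BH_mul_Phi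
    (hind : LinearIndependent ℂ (fun g : G => (ρ g : Matrix (Fin n) (Fin n) ℂ).mulVec φ)) :
    (guReciprocal n ρ φ)ᴴ * guMatrix n ρ φ = 1 := by
  have hA := gram_posDef n ρ φ hind
  have hdet : IsUnit ((guMatrix n ρ φ)ᴴ * guMatrix n ρ φ).det :=
    (Matrix.isUnit_iff_isUnit_det _).mp hA.isUnit
  have hinvH : (((guMatrix n ρ φ)ᴴ * guMatrix n ρ φ)⁻¹).IsHermitian := hA.1.inv
  rw [guReciprocal, Matrix.conjTranspose_mul, hinvH.eq, Matrix.mul_assoc,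
    Matrix.nonsing_inv_mul _ hdet]

private lemma key_ineq
    (hind : LinearIndependent ℂ (fun g : G => (ρ g : Matrix (Fin n) (Fin n) ℂ).mulVec φ))
    (p : G → ℝ) (hp : guPrimalFeasible n ρ φ p)
    {lam : ℝ} (v : G → ℂ)
    (hv : ((guMatrix n ρ φ)ᴴ * guMatrix n ρ φ) *ᵥ v = (lam : ℂ) • v) :
    ∑ g : G, p g * Complex.normSq (v g) ≤ lam * ∑ g : G, Complex.normSq (v g) := by
  set Φm := guMatrix n ρ φ with hΦm
  set B := guReciprocal n ρ φ with hB
  set x := Φm *ᵥ v with hx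
  have hBphi : Bᴴ * Φm = 1 := BH_mul_Phi n ρ φ hind
  have hcol : ∀ g : G, (star fun a => B a g) ⬝ᵥ x = v g := by
    intro g
    rw [hx, Matrix.dotProduct_mulVec]
    have hrow : (star fun a => B a g) ᵥ* Φm = fun k => (Bᴴ * Φm) g k := by
      funext k
      simp [Matrix.vecMul, dotProduct, Matrix.mul_apply, Matrix.conjTranspose_apply]
    rw [hrow, hBphi]
    show ((1 : Matrix G G ℂ) *ᵥ v) g = v g
    rw [Matrix.one_mulVec]
  have hQ : ∀ g : G, star x ⬝ᵥ (guQop n ρ φ g *ᵥ x) = (Complex.normSq (v g) : ℂ) := by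
    intro g
    have hQx : guQop n ρ φ g *ᵥ x = ((star fun a => B a g) ⬝ᵥ x) • fun a => B a g := by
      funext a
      simp only [guQop, Matrix.mulVec, dotProduct, Matrix.vecMulVec_apply, Pi.smul_apply,
        smul_eq_mul, Pi.star_apply, mul_assoc, ← Finset.mul_sum]
      ring
    have hsx : star x ⬝ᵥ (fun a => B a g) = star (v g) := by
      rw [Matrix.star_dotProduct, hcol g]
    rw [hQx, dotProduct_smul, hcol g, smul_eq_mul, hsx, Complex.star_def,
      Complex.mul_conj]
  have hsv : star v ⬝ᵥ v = ∑ g : G, (Complex.normSq (v g) : ℂ) := by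
    simp only [dotProduct, Pi.star_apply, Complex.star_def]
    exact Finset.sum_congr rfl fun g _ => by rw [mul_comm, Complex.mul_conj]
  have hxx : star x ⬝ᵥ x = (lam : ℂ) * ∑ g : G, (Complex.normSq (v g) : ℂ) := by
    rw [hx, Matrix.star_mulVec, Matrix.dotProduct_mulVec, Matrix.vecMul_vecMul,
      ← Matrix.dotProduct_mulVec, hv, dotProduct_smul, smul_eq_mul, hsv]
  have hfeas := hp.2.dotProduct_mulVec_nonneg x
  rw [Matrix.sub_mulVec, Matrix.one_mulVec, dotProduct_sub, sum_mulVec',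
    dotProduct_sum'] at hfeas
  have hterm : ∀ g : G, star x ⬝ᵥ (((p g : ℂ) • guQop n ρ φ g) *ᵥ x)
      = (p g : ℂ) * (Complex.normSq (v g) : ℂ) := by
    intro g
    rw [Matrix.smul_mulVec, dotProduct_smul, smul_eq_mul, hQ g]
  rw [Finset.sum_congr rfl fun g _ => hterm g, hxx] at hfeas
  have hcast : ((lam * ∑ g : G, Complex.normSq (v g)
        - ∑ g : G, p g * Complex.normSq (v g) : ℝ) : ℂ)
      = (lam : ℂ) * (∑ g : G, (Complex.normSq (v g) : ℂ))
        - ∑ g : G, (p g : ℂ) * (Complex.normSq (v g) : ℂ) := by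
    push_cast
    ring
  rw [← hcast] at hfeas
  exact sub_nonneg.mp (Complex.zero_le_real.mp hfeas)


private lemma alg_feas {m : Type*} [Fintype m] [DecidableEq m]
    (Φm : Matrix (Fin n) m ℂ) (l : ℂ)
    (hdet : IsUnit (Φmᴴ * Φm).det) (hinvH : ((Φmᴴ * Φm)⁻¹).IsHermitian)
    (hmin : ((Φmᴴ * Φm) - l • 1).PosSemidef) :
    ((1 : Matrix (Fin n) (Fin n) ℂ)
      - l • (Φm * (Φmᴴ * Φm)⁻¹ * (Φm * (Φmᴴ * Φm)⁻¹)ᴴ)).PosSemidef := by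
  set A := Φmᴴ * Φm with hA
  set B := Φm * A⁻¹ with hBdef
  set P := B * Φmᴴ with hPdef
  have hBH : Bᴴ = A⁻¹ * Φmᴴ := by
    rw [hBdef, Matrix.conjTranspose_mul, hinvH.eq]
  have hPhiB : Φmᴴ * B = 1 := by
    rw [hBdef, ← Matrix.mul_assoc, ← hA, Matrix.mul_nonsing_inv _ hdet]
  have hBA : B * A = Φm := by
    rw [hBdef, Matrix.mul_assoc, Matrix.nonsing_inv_mul _ hdet, Matrix.mul_one]
  have hPH : Pᴴ = P := by
    rw [hPdef, Matrix.conjTranspose_mul, Matrix.conjTranspose_conjTranspose, hBH,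
      ← Matrix.mul_assoc, ← hBdef]
  have hPP : P * P = P := by
    rw [hPdef, Matrix.mul_assoc B Φmᴴ (B * Φmᴴ), ← Matrix.mul_assoc Φmᴴ B Φmᴴ, hPhiB,
      Matrix.one_mul]
  have h1P : ((1 : Matrix (Fin n) (Fin n) ℂ) - P).PosSemidef := by
    have hsq : ((1 : Matrix (Fin n) (Fin n) ℂ) - P) = (1 - P)ᴴ * (1 - P) := by
      rw [Matrix.conjTranspose_sub, Matrix.conjTranspose_one, hPH]
      have expand : ((1 : Matrix (Fin n) (Fin n) ℂ) - P) * (1 - P)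
          = 1 - P - P + P * P := by noncomm_ring
      rw [expand, hPP]
      abel
    rw [hsq]
    exact Matrix.posSemidef_conjTranspose_mul_self _
  have h2 : (B * (A - l • 1) * Bᴴ).PosSemidef := hmin.mul_mul_conjTranspose_same B
  have e1 : B * A * Bᴴ = P := by
    rw [hBA, hPdef, hBH, ← Matrix.mul_assoc, ← hBdef]
  have e2 : B * (l • (1 : Matrix m m ℂ)) * Bᴴ = l • (B * Bᴴ) := by
    rw [Matrix.mul_smul, Matrix.mul_one, Matrix.smul_mul]
  have hid : (1 : Matrix (Fin n) (Fin n) ℂ) - l • (B * Bᴴ)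
      = ((1 : Matrix (Fin n) (Fin n) ℂ) - P) + B * (A - l • 1) * Bᴴ := by
    rw [Matrix.mul_sub, Matrix.sub_mul, e1, e2]
    abel
  rw [hid]
  exact h1P.add h2

end Helpers

theorem stmt_15 {G : Type*} [Group G] [Fintype G] [DecidableEq G] (n : ℕ)
    (ρ : G →* Matrix.unitaryGroup (Fin n) ℂ) (φ : Fin n → ℂ)
    (hind : LinearIndependent ℂ (fun g : G => (ρ g : Matrix (Fin n) (Fin n) ℂ).mulVec φ))
    (lam : ℝ)
    -- `lam` is the smallest eigenvalue of the Gram matrix `ΦᴴΦ`: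
    (hev : ∃ u : G → ℂ, u ≠ 0 ∧
      ((guMatrix n ρ φ)ᴴ * guMatrix n ρ φ).mulVec u = (lam : ℂ) • u)
    (hmin : (((guMatrix n ρ φ)ᴴ * guMatrix n ρ φ) - (lam : ℂ) • 1).PosSemidef) :
    guPrimalFeasible n ρ φ (fun _ => lam) ∧
      ∀ p : G → ℝ, guPrimalFeasible n ρ φ p →
        (1 / (Fintype.card G : ℝ)) * ∑ g : G, p g ≤ lam := by
  have hA := gram_posDef n ρ φ hind
  have hdet : IsUnit ((guMatrix n ρ φ)ᴴ * guMatrix n ρ φ).det :=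
    (Matrix.isUnit_iff_isUnit_det _).mp hA.isUnit
  have hinvH : (((guMatrix n ρ φ)ᴴ * guMatrix n ρ φ)⁻¹).IsHermitian := hA.1.inv
  obtain ⟨u, hu0, hu⟩ := hev
  have hsv : star u ⬝ᵥ u = ((∑ g : G, Complex.normSq (u g) : ℝ) : ℂ) := by
    push_cast
    simp only [dotProduct, Pi.star_apply, Complex.star_def]
    exact Finset.sum_congr rfl fun g _ => by rw [mul_comm, Complex.mul_conj]
  have hNupos : 0 < ∑ g : G, Complex.normSq (u g) := by
    obtain ⟨g, hg⟩ := Function.ne_iff.mp hu0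
    exact Finset.sum_pos' (fun i _ => Complex.normSq_nonneg _)
      ⟨g, Finset.mem_univ g, Complex.normSq_pos.mpr hg⟩
  have hlam0 : 0 ≤ lam := by
    have h0 := hA.posSemidef.dotProduct_mulVec_nonneg u
    rw [hu, dotProduct_smul, smul_eq_mul, hsv, ← Complex.ofReal_mul] at h0
    have h1 := Complex.zero_le_real.mp h0
    nlinarith [hNupos]
  constructor
  · refine ⟨fun _ => hlam0, ?_⟩
    have hsum : ∑ g : G, ((fun _ : G => lam) g : ℂ) • guQop n ρ φ g
        = (lam : ℂ) • (guReciprocal n ρ φ * (guReciprocal n ρ φ)ᴴ) := by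
      rw [← Finset.smul_sum, sumQ]
    rw [hsum]
    exact alg_feas n (guMatrix n ρ φ) (lam : ℂ) hdet hinvH hmin
  · intro p hp
    have key : ∀ h : G, ∑ g : G, p g * Complex.normSq (u (h⁻¹ * g))
        ≤ lam * ∑ g : G, Complex.normSq (u g) := by
      intro h
      have hk := key_ineq n ρ φ hind p hp (fun g => u (h⁻¹ * g)) (shift_eig n ρ φ hu h)
      have hre : ∑ g : G, Complex.normSq (u (h⁻¹ * g)) = ∑ g : G, Complex.normSq (u g) :=
        Fintype.sum_equiv (Equiv.mulLeft h⁻¹) _ _ (fun g => rfl)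
      rwa [hre] at hk
    have hsum := Finset.sum_le_sum (fun h (_ : h ∈ Finset.univ) => key h)
    have hswap : ∑ h : G, ∑ g : G, p g * Complex.normSq (u (h⁻¹ * g))
        = (∑ g : G, p g) * ∑ g : G, Complex.normSq (u g) := by
      rw [Finset.sum_comm, Finset.sum_mul]
      refine Finset.sum_congr rfl fun g _ => ?_
      rw [← Finset.mul_sum]
      congr 1
      exact Fintype.sum_equiv ((Equiv.inv G).trans (Equiv.mulRight g)) _ _ (fun h => rfl)
    rw [hswap, Finset.sum_const, Finset.card_univ, nsmul_eq_mul] at hsum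
    have hcard : (0:ℝ) < (Fintype.card G : ℝ) := by
      have : Nonempty G := ⟨1⟩
      exact_mod_cast Fintype.card_pos
    have h2 : (∑ g : G, p g) * (∑ g : G, Complex.normSq (u g))
        ≤ ((Fintype.card G : ℝ) * lam) * (∑ g : G, Complex.normSq (u g)) := by
      rw [mul_assoc]; exact hsum
    have h3 := le_of_mul_le_mul_right h2 hNupos
    rw [one_div]
    calc (Fintype.card G : ℝ)⁻¹ * ∑ g : G, p g
        ≤ (Fintype.card G : ℝ)⁻¹ * ((Fintype.card G : ℝ) * lam) :=
          mul_le_mul_of_nonneg_left h3 (by positivity)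
      _ = lam := by field_simp
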